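/- arXiv:2503.14052 — 3 statements merged into one kernel-verified Lean document; each statement's English description precedes it below -/
import Mathlib

section
/- A subgroup H of ℤ_p^× is open if and only if H is infinite. Equivalently: every infinite closed subgroup of ℤ_p^× is open. -/
open PadicInt Topology
variable {p : ℕ} [Fact p.Prime]

/-- `(1+a)^t` is `1 + t a` up to `a^2`. -/
lemma aux_pow_approx (a : ℤ_[p]) (t : ℕ) : ‖(1+a)^t - 1 - t*a‖ ≤ ‖a‖^2 := by
  induction t with
  | zero => simp [sq_nonneg]
  | succ t ih =>
    have key : (1+a)^(t+1) - 1 - (t+1)*a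
        = ((1+a)^t - 1 - t*a)*(1+a) + (t:ℤ_[p])*a^2 := by ring
    rw [Nat.cast_add, Nat.cast_one, key]
    refine le_trans (PadicInt.nonarchimedean _ _) (max_le ?_ ?_)
    · rw [norm_mul]
      calc ‖(1+a)^t - 1 - t*a‖ * ‖1+a‖ ≤ ‖a‖^2 * 1 :=
            mul_le_mul ih (PadicInt.norm_le_one _) (norm_nonneg _) (by positivity)
        _ = ‖a‖^2 := mul_one _
    · rw [norm_mul, norm_pow]
      calc ‖(t:ℤ_[p])‖ * ‖a‖^2 ≤ 1 * ‖a‖^2 :=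
            mul_le_mul_of_nonneg_right (PadicInt.norm_le_one _) (by positivity)
        _ = ‖a‖^2 := one_mul _

lemma aux_expand (hp3 : 3 ≤ p) (a : ℤ_[p]) (ha : (p:ℤ_[p]) ∣ a) :
    ∃ S : ℤ_[p], (1+a)^p = 1 + p*a + a^2*S ∧ (p:ℤ_[p]) ∣ S := by
  have hprime : p.Prime := Fact.out
  refine ⟨∑ i ∈ Finset.range (p-1), (p.choose (i+2) : ℤ_[p]) * a^i, ?_, ?_⟩
  · rw [add_comm 1 a, add_pow]
    simp only [one_pow, mul_one]
    rw [show p+1 = (p-1)+1+1 by omega, Finset.sum_range_succ', Finset.sum_range_succ']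
    have : ∀ i, a^(i+1+1) * ((p.choose (i+1+1) : ℕ) : ℤ_[p])
        = a^2 * (((p.choose (i+2) : ℕ) : ℤ_[p]) * a^i) := by
      intro i; rw [show i+1+1 = i+2 by omega]; ring
    rw [Finset.sum_congr rfl (fun i _ => this i), ← Finset.mul_sum]
    simp [Nat.choose_one_right]
    ring
  · apply Finset.dvd_sum
    intro i hi
    simp only [Finset.mem_range] at hi
    rcases eq_or_lt_of_le (Nat.lt_succ_iff.mp (by omega : i < (p-2)+1)) with h | h
    · -- last term: i+2 = p, choose = 1, a^(p-2) divisible by p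
      have hip : i + 2 = p := by omega
      rw [hip, Nat.choose_self]
      obtain ⟨c, rfl⟩ := ha
      refine Dvd.dvd.mul_left ⟨c * ((p:ℤ_[p])*c)^(i-1), ?_⟩ _
      rw [show i = (i-1)+1 by omega]
      push_cast
      ring
    · have hd : p ∣ p.choose (i+2) := hprime.dvd_choose_self (by omega) (by omega)
      exact Dvd.dvd.mul_right (Nat.cast_dvd_cast hd) _

lemma aux_dvd_norm_le {z : ℤ_[p]} (h : (p:ℤ_[p]) ∣ z) : ‖z‖ ≤ (p:ℝ)⁻¹ := by
  obtain ⟨c, rfl⟩ := h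
  rw [norm_mul, PadicInt.norm_p]
  exact mul_le_of_le_one_right (by positivity) (PadicInt.norm_le_one c)

lemma aux_pow_p_norm (hp3 : 3 ≤ p) (k : ℕ) (hk : 1 ≤ k) (a : ℤ_[p])
    (ha : ‖a‖ = (p:ℝ)^(-(k:ℤ))) :
    ‖(1+a)^p - 1‖ = (p:ℝ)^(-((k:ℤ)+1)) := by
  have hp1 : (1:ℝ) < p := by exact_mod_cast Fact.out (p := p.Prime) |>.one_lt
  have hp0 : (0:ℝ) < p := by linarith
  have hdvd : (p:ℤ_[p]) ∣ a := by
    rw [← PadicInt.norm_lt_one_iff_dvd, ha]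
    exact zpow_lt_one_of_neg₀ hp1 (by omega)
  obtain ⟨S, hS, hSd⟩ := aux_expand hp3 a hdvd
  have h1 : (1+a)^p - 1 = p*a + a^2*S := by rw [hS]; ring
  have hpa : ‖(p:ℤ_[p])*a‖ = (p:ℝ)^(-((k:ℤ)+1)) := by
    rw [norm_mul, PadicInt.norm_p, ha, ← zpow_neg_one, ← zpow_add₀ (by positivity : (p:ℝ) ≠ 0)]
    ring_nf
  have hsmall : ‖a^2*S‖ < (p:ℝ)^(-((k:ℤ)+1)) := by
    calc ‖a^2*S‖ ≤ (p:ℝ)^(-(2*(k:ℤ))) * (p:ℝ)⁻¹ := by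
          rw [norm_mul, norm_pow, ha]
          refine mul_le_mul (le_of_eq ?_) (aux_dvd_norm_le hSd) (norm_nonneg _) (by positivity)
          rw [← zpow_natCast, ← zpow_mul]; ring_nf
      _ = (p:ℝ)^(-(2*(k:ℤ))-1) := by
          rw [← zpow_neg_one, ← zpow_add₀ (by positivity : (p:ℝ) ≠ 0)]; ring_nf
      _ < (p:ℝ)^(-((k:ℤ)+1)) := by
          apply zpow_lt_zpow_right₀ hp1; omega
  rw [h1, PadicInt.norm_add_eq_max_of_ne (show ‖(p:ℤ_[p])*a‖ ≠ ‖a^2*S‖ by rw [hpa]; exact ne_of_gt hsmall), hpa]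
  exact max_eq_left hsmall.le

lemma aux_pow_p_iter (hp3 : 3 ≤ p) (m : ℕ) (hm : 1 ≤ m) (a : ℤ_[p])
    (ha : ‖a‖ = (p:ℝ)^(-(m:ℤ))) (j : ℕ) :
    ‖(1+a)^(p^j) - 1‖ = (p:ℝ)^(-((m+j : ℕ):ℤ)) := by
  induction j with
  | zero => simpa using ha
  | succ j ih =>

    have key : (1+a)^(p^(j+1)) = (1 + ((1+a)^(p^j) - 1))^p := by
      rw [add_sub_cancel, ← pow_mul, pow_succ]
    rw [key, aux_pow_p_norm hp3 (m+j) (by omega) _ ih]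
    norm_num
    ring_nf

lemma aux_dvd_of_toZMod_eq_zero {z : ℤ_[p]} (h : toZMod z = 0) : (p:ℤ_[p]) ∣ z := by
  have h2 : z ∈ IsLocalRing.maximalIdeal ℤ_[p] := by
    rw [← PadicInt.ker_toZMod]; exact h
  rwa [PadicInt.maximalIdeal_eq_span_p, Ideal.mem_span_singleton] at h2

/-- decompose an element of exact norm `p^(-k)` as `p^k * unit` -/
lemma aux_decomp {k : ℕ} {a : ℤ_[p]} (ha : ‖a‖ = (p:ℝ)^(-(k:ℤ))) :
    ∃ u : ℤ_[p]ˣ, a = (p:ℤ_[p])^k * u := by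
  have hp1 : (1:ℝ) < p := by exact_mod_cast Fact.out (p := p.Prime) |>.one_lt
  have ha0 : a ≠ 0 := by
    intro h; rw [h, norm_zero] at ha
    exact absurd ha.symm (ne_of_gt (by positivity))
  have hval : a.valuation = k := by
    have h1 := PadicInt.norm_eq_zpow_neg_valuation ha0
    rw [ha] at h1
    have h2 : -(k:ℤ) = -a.valuation := zpow_right_injective₀ (by linarith) (by linarith) h1
    have h3 := Nat.zero_le a.valuation
    omega
  refine ⟨unitCoeff ha0, ?_⟩
  rw [mul_comm, ← hval]
  exact unitCoeff_spec ha0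

lemma aux_approx_step (k : ℕ) (hk : 1 ≤ k) (x w : ℤ_[p])
    (hx : ‖x - 1‖ = (p:ℝ)^(-(k:ℤ))) (hw : ‖w - 1‖ ≤ (p:ℝ)^(-(k:ℤ))) :
    ∃ t : ℕ, ‖x^t - w‖ ≤ (p:ℝ)^(-((k:ℤ)+1)) := by
  have hp1 : (1:ℝ) < p := by exact_mod_cast Fact.out (p := p.Prime) |>.one_lt
  have hppos : (0:ℝ) < p := by linarith
  set a := x - 1 with ha_def
  obtain ⟨u, hu⟩ := aux_decomp hx
  -- b = w - 1 = p^k * c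
  have hb : (p:ℤ_[p])^k ∣ (w - 1) := by
    have h := (PadicInt.norm_le_pow_iff_mem_span_pow (w-1) k).mp hw
    rwa [Ideal.mem_span_singleton] at h
  obtain ⟨c, hc⟩ := hb
  -- choose t with t * u ≡ c  mod p
  set d : ℤ_[p] := c * ((u⁻¹ : ℤ_[p]ˣ) : ℤ_[p]) with hd_def
  set t : ℕ := (toZMod d).val with ht_def
  have htd : (p:ℤ_[p]) ∣ ((t:ℤ_[p]) - d) := by
    apply aux_dvd_of_toZMod_eq_zero
    rw [map_sub, map_natCast, ht_def, ZMod.natCast_rightInverse (toZMod d), sub_self]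
  have htc : (p:ℤ_[p]) ∣ ((t:ℤ_[p]) * u - c) := by
    obtain ⟨e, he⟩ := htd
    refine ⟨e * u, ?_⟩
    have : ((t:ℤ_[p]) - d) * u = ((p:ℤ_[p]) * e) * u := by rw [he]
    calc (t:ℤ_[p]) * u - c = ((t:ℤ_[p]) - d) * u := by
          rw [hd_def, sub_mul, mul_assoc, Units.inv_mul, mul_one]
      _ = (p:ℤ_[p]) * (e * u) := by rw [he]; ring
  refine ⟨t, ?_⟩
  -- x^t - w = ((1+a)^t - 1 - t a) + (t a - (w-1))
  have hxa : x = 1 + a := by rw [ha_def]; ring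
  have hsplit : x^t - w = ((1+a)^t - 1 - t*a) + ((t:ℤ_[p])*a - (w - 1)) := by
    rw [hxa]; ring
  rw [hsplit]
  refine le_trans (PadicInt.nonarchimedean _ _) (max_le ?_ ?_)
  · calc ‖(1+a)^t - 1 - t*a‖ ≤ ‖a‖^2 := aux_pow_approx a t
      _ = (p:ℝ)^(-(2*(k:ℤ))) := by rw [hx, ← zpow_natCast, ← zpow_mul]; ring_nf
      _ ≤ (p:ℝ)^(-((k:ℤ)+1)) := by apply zpow_le_zpow_right₀ hp1.le; omega
  · have key : (t:ℤ_[p])*a - (w - 1) = (p:ℤ_[p])^k * ((t:ℤ_[p]) * u - c) := by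
      rw [hu, hc]; ring
    rw [key, norm_mul, PadicInt.norm_p_pow]
    calc (p:ℝ)^(-(k:ℤ)) * ‖(t:ℤ_[p]) * u - c‖ ≤ (p:ℝ)^(-(k:ℤ)) * (p:ℝ)⁻¹ := by
          exact mul_le_mul_of_nonneg_left (aux_dvd_norm_le htc) (by positivity)
      _ = (p:ℝ)^(-((k:ℤ)+1)) := by
          rw [← zpow_neg_one, ← zpow_add₀ (by positivity : (p:ℝ) ≠ 0)]; ring_nf
lemma aux_norm_one_of {h : ℤ_[p]} {m : ℕ} (hm : 1 ≤ m) (hh : ‖h - 1‖ = (p:ℝ)^(-(m:ℤ))) :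
    ‖h‖ = 1 := by
  have hp1 : (1:ℝ) < p := by exact_mod_cast Fact.out (p := p.Prime) |>.one_lt
  have hlt : ‖h - 1‖ < 1 := by rw [hh]; exact zpow_lt_one_of_neg₀ hp1 (by omega)
  have : h = 1 + (h - 1) := by ring
  rw [this, PadicInt.norm_add_eq_max_of_ne (by simp; exact ne_of_gt hlt)]
  simp [max_eq_left hlt.le]

lemma aux_dense (hp3 : 3 ≤ p) (m : ℕ) (hm : 1 ≤ m) (h y : ℤ_[p])
    (hh : ‖h - 1‖ = (p:ℝ)^(-(m:ℤ))) (hy : ‖y - 1‖ ≤ (p:ℝ)^(-(m:ℤ))) (j : ℕ) :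
    ∃ n : ℕ, ‖h^n - y‖ ≤ (p:ℝ)^(-((m+j:ℕ):ℤ)) := by
  induction j with
  | zero => exact ⟨0, by simpa [norm_sub_rev] using hy⟩
  | succ j ih =>
    obtain ⟨n, hn⟩ := ih
    have hhu : IsUnit h := PadicInt.isUnit_iff.mpr (aux_norm_one_of hm hh)
    obtain ⟨h₀, hh₀⟩ := hhu
    set w : ℤ_[p] := y * ((h₀⁻¹ : ℤ_[p]ˣ) : ℤ_[p])^n with hw_def
    have hinv : h^n * ((h₀⁻¹ : ℤ_[p]ˣ):ℤ_[p])^n = 1 := by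
      rw [← hh₀, ← mul_pow, ← Units.val_mul, mul_inv_cancel, Units.val_one, one_pow]
    have hyw : h^n * w = y := by
      rw [hw_def, mul_comm y, ← mul_assoc, hinv, one_mul]
    have hwn : ‖w - 1‖ = ‖y - h^n‖ := by
      have hw1 : w - 1 = (y - h^n) * ((h₀⁻¹:ℤ_[p]ˣ):ℤ_[p])^n := by
        rw [sub_mul, ← hw_def, hinv]
      rw [hw1, norm_mul, norm_pow, PadicInt.norm_units, one_pow, mul_one]
    have hw : ‖w - 1‖ ≤ (p:ℝ)^(-((m+j:ℕ):ℤ)) := by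
      rw [hwn, norm_sub_rev]; exact hn
    have hx : ‖h^(p^j) - 1‖ = (p:ℝ)^(-((m+j:ℕ):ℤ)) := by
      have := aux_pow_p_iter hp3 m hm (h-1) hh j
      rwa [add_sub_cancel] at this
    obtain ⟨t, ht⟩ := aux_approx_step (m+j) (by omega) (h^(p^j)) w hx hw
    refine ⟨n + p^j * t, ?_⟩
    have hcalc : h^(n + p^j*t) - y = h^n * ((h^(p^j))^t - w) := by
      rw [mul_sub, hyw, pow_add, pow_mul]
    rw [hcalc, norm_mul, norm_pow, aux_norm_one_of hm hh, one_pow, one_mul]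
    refine le_trans ht (le_of_eq ?_)
    norm_num
    ring_nf

/-- For an odd prime `p`, a closed subgroup of `ℤ_p^×` is open iff it is infinite. -/
theorem closed_subgroup_padic_units_open_iff_infinite (p : ℕ) [Fact p.Prime] (hp : Odd p)
    (H : Subgroup ℤ_[p]ˣ) (hH : IsClosed (H : Set ℤ_[p]ˣ)) :
    IsOpen (H : Set ℤ_[p]ˣ) ↔ (H : Set ℤ_[p]ˣ).Infinite := by
  have hprime : p.Prime := Fact.out
  have hp3 : 3 ≤ p := by
    have := hprime.two_le
    rcases Nat.odd_iff.mp hp with h2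
    omega
  have hp1 : (1:ℝ) < p := by exact_mod_cast hprime.one_lt
  have hpinv : (p:ℝ)⁻¹ < 1 := inv_lt_one_of_one_lt₀ hp1
  constructor
  · -- open → infinite
    intro hO
    have hopen : IsOpen (Units.val '' (H : Set ℤ_[p]ˣ)) :=
      Units.isOpenEmbedding_val.isOpenMap _ hO
    have h1 : (1:ℤ_[p]) ∈ Units.val '' (H : Set ℤ_[p]ˣ) := ⟨1, H.one_mem, rfl⟩
    obtain ⟨ε, hε, hball⟩ := Metric.isOpen_iff.mp hopen 1 h1
    obtain ⟨k, hk⟩ := exists_pow_lt_of_lt_one hε hpinv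
    have hmem : ∀ n : ℕ, (1 + (p:ℤ_[p])^(k+n)) ∈ Metric.ball (1:ℤ_[p]) ε := by
      intro n
      rw [Metric.mem_ball, dist_eq_norm, add_sub_cancel_left, PadicInt.norm_p_pow]
      calc (p:ℝ)^(-((k+n:ℕ)):ℤ) ≤ (p:ℝ)^(-(k:ℤ)) := by
            apply zpow_le_zpow_right₀ hp1.le; push_cast; omega
        _ = ((p:ℝ)⁻¹)^k := by rw [inv_pow, ← zpow_natCast, ← zpow_neg]
        _ < ε := hk
    have hinj : Function.Injective (fun n : ℕ => (1 + (p:ℤ_[p])^(k+n))) := by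
      intro a b hab
      simp only [add_right_inj] at hab
      have := congrArg norm hab
      rw [PadicInt.norm_p_pow, PadicInt.norm_p_pow] at this
      have := zpow_right_injective₀ (by linarith) (by linarith) this
      omega
    have hbi : (Metric.ball (1:ℤ_[p]) ε).Infinite :=
      Set.infinite_of_injective_forall_mem hinj hmem
    exact Set.Infinite.of_image _ (hbi.mono hball)
  · -- infinite → open
    intro hI
    obtain ⟨x, hx, y, hy, hxy, hf⟩ := hI.exists_ne_map_eq_of_mapsTo
      (f := fun u : ℤ_[p]ˣ => PadicInt.toZMod (↑u : ℤ_[p]))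
      (Set.mapsTo_univ _ _) Set.finite_univ
    set g : ℤ_[p]ˣ := x⁻¹ * y with hg_def
    have hgH : g ∈ H := H.mul_mem (H.inv_mem hx) hy
    have hgval : (↑g : ℤ_[p]) - 1 = (↑x⁻¹ : ℤ_[p]) * ((↑y:ℤ_[p]) - ↑x) := by
      have : (↑x⁻¹ : ℤ_[p]) * ↑x = 1 := by
        rw [← Units.val_mul, inv_mul_cancel, Units.val_one]
      rw [mul_sub, this, hg_def, Units.val_mul]
    have hnorm : ‖(↑g:ℤ_[p]) - 1‖ = ‖(↑y:ℤ_[p]) - ↑x‖ := by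
      rw [hgval, norm_mul, PadicInt.norm_units, one_mul]
    have hdvd : (p:ℤ_[p]) ∣ ((↑y:ℤ_[p]) - ↑x) :=
      aux_dvd_of_toZMod_eq_zero (by rw [map_sub, hf, sub_self])
    have hne : ((↑y:ℤ_[p]) - ↑x) ≠ 0 := sub_ne_zero.mpr (fun e => hxy (Units.ext e.symm))
    have ha0 : (↑g:ℤ_[p]) - 1 ≠ 0 := by rw [hgval]; exact mul_ne_zero (Units.ne_zero _) hne
    set m : ℕ := ((↑g:ℤ_[p]) - 1).valuation with hm_def
    have hgnorm : ‖(↑g:ℤ_[p]) - 1‖ = (p:ℝ)^(-(m:ℤ)) := by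
      rw [PadicInt.norm_eq_zpow_neg_valuation ha0]
    have hm1 : 1 ≤ m := by
      by_contra hc
      have hm0 : m = 0 := by omega
      rw [hm0] at hgnorm
      simp at hgnorm
      have hle : ‖(↑g:ℤ_[p]) - 1‖ ≤ (p:ℝ)⁻¹ := by rw [hnorm]; exact aux_dvd_norm_le hdvd
      rw [hgnorm] at hle
      linarith
    have claim : ∀ z : ℤ_[p]ˣ, ‖(↑z:ℤ_[p]) - 1‖ ≤ (p:ℝ)^(-(m:ℤ)) → z ∈ H := by
      intro z hz
      have hcl : (↑z:ℤ_[p]) ∈ closure (Units.val '' (H : Set ℤ_[p]ˣ)) := by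
        rw [Metric.mem_closure_iff]
        intro ε hε
        obtain ⟨j, hj⟩ := exists_pow_lt_of_lt_one hε hpinv
        obtain ⟨n, hn⟩ := aux_dense hp3 m hm1 (↑g) (↑z) hgnorm hz j
        refine ⟨↑(g^n), ⟨g^n, H.pow_mem hgH n, rfl⟩, ?_⟩
        rw [dist_eq_norm, norm_sub_rev, Units.val_pow_eq_pow_val]
        calc ‖(↑g:ℤ_[p])^n - ↑z‖ ≤ (p:ℝ)^(-((m+j:ℕ):ℤ)) := hn
          _ ≤ (p:ℝ)^(-(j:ℤ)) := by apply zpow_le_zpow_right₀ hp1.le; push_cast; omega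
          _ = ((p:ℝ)⁻¹)^j := by rw [inv_pow, ← zpow_natCast, ← zpow_neg]
          _ < ε := hj
      have hemb := Units.isOpenEmbedding_val.toIsEmbedding.closure_eq_preimage_closure_image
        (H : Set ℤ_[p]ˣ)
      have hz2 : z ∈ closure (H : Set ℤ_[p]ˣ) := by rw [hemb]; exact hcl
      rwa [hH.closure_eq] at hz2
    apply Subgroup.isOpen_of_mem_nhds (g := (1:ℤ_[p]ˣ))
    have hU : Units.val ⁻¹' (Metric.ball (1:ℤ_[p]) ((p:ℝ)^(-(m:ℤ)))) ∈ 𝓝 (1:ℤ_[p]ˣ) := by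
      refine IsOpen.mem_nhds (Metric.isOpen_ball.preimage Units.continuous_val) ?_
      simp only [Set.mem_preimage, Metric.mem_ball, Units.val_one, dist_self]
      positivity
    exact Filter.mem_of_superset hU
      (fun z hz => claim z (le_of_lt (by
        simpa [dist_eq_norm] using (Set.mem_preimage.mp hz))))
end

section
/- Let G be a compact p-adic Lie group Gal(𝕃/𝕂) for a Galois extension 𝕃/𝕂 with 𝕂 a number field, let τ ∈ Z(G) be a central element acting on all p-power roots of unity in 𝕃 by ζ ↦ ζ^g with a fixed integer g > 1, and let α ∈ 𝕃^× not a root of unity. Set β = τ(α)/α^g. Then: (1) β is not a root of unity; (2) h(β) ≤ (g+1)·h(α), where h is the absolute logarithmic Weil height. -/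
/-- Let `τ` be an automorphism acting as `ζ ↦ ζ^g` (`g > 1`) on `p`-power roots of unity,
`h` a height function with the standard properties of the absolute logarithmic Weil height,
and `α` a nonzero non-torsion element. Then `β = τ(α)/α^g` is not a root of unity and
`h(β) ≤ (g+1)·h(α)`. -/
theorem beta_not_root_of_unity_and_height_bound (p : ℕ) [Fact p.Prime]
    (L : Type*) [Field L] (h : L → ℝ)
    (h_mul : ∀ x y : L, h (x * y) ≤ h x + h y)
    (h_inv : ∀ x : L, h x⁻¹ = h x)
    (h_pow : ∀ (x : L) (n : ℕ), h (x ^ n) = n * h x)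
    (h_aut : ∀ (σ : L ≃+* L) (x : L), h (σ x) = h x)
    (h_kron : ∀ x : L, h x = 0 ↔ x = 0 ∨ ∃ n : ℕ, 0 < n ∧ x ^ n = 1)
    (τ : L ≃+* L) (g : ℕ) (hg : 1 < g)
    (hτ : ∀ ζ : L, (∃ k : ℕ, ζ ^ p ^ k = 1) → τ ζ = ζ ^ g)
    (α : L) (hα0 : α ≠ 0) (hαtors : ¬ ∃ n : ℕ, 0 < n ∧ α ^ n = 1) :
    (¬ ∃ n : ℕ, 0 < n ∧ (τ α / α ^ g) ^ n = 1) ∧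
      h (τ α / α ^ g) ≤ ((g : ℝ) + 1) * h α := by
  have hα : h α ≠ 0 := by
    intro h0
    rcases (h_kron α).mp h0 with h1 | h2
    · exact hα0 h1
    · exact hαtors h2
  constructor
  · rintro ⟨n, hn, hβn⟩
    have hαg : (α : L) ^ g ≠ 0 := pow_ne_zero _ hα0
    have key : (τ α) ^ n = α ^ (g * n) := by
      have : (τ α) ^ n = (α ^ g) ^ n := by
        field_simp [div_pow, div_eq_one_iff_eq] at hβn
        exact (div_eq_one_iff_eq (pow_ne_zero _ hαg)).mp (by rwa [div_pow] at hβn)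
      rw [this, ← pow_mul]
    have h1 : (n : ℝ) * h α = (g * n : ℕ) * h α := by
      calc (n : ℝ) * h α = (n : ℝ) * h (τ α) := by rw [h_aut]
        _ = h ((τ α) ^ n) := (h_pow _ _).symm
        _ = h (α ^ (g * n)) := by rw [key]
        _ = (g * n : ℕ) * h α := h_pow _ _
    have hgn : ((g * n : ℕ) : ℝ) ≠ (n : ℝ) := by
      have : n < g * n := by
        calc n = 1 * n := (one_mul n).symm
        _ < g * n := (Nat.mul_lt_mul_right hn).mpr hg
      exact_mod_cast this.ne'
    have : ((n : ℝ) - (g * n : ℕ)) * h α = 0 := by ring_nf; linarith [h1]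
    rcases mul_eq_zero.mp this with h2 | h2
    · exact hgn (by linarith)
    · exact hα h2
  · calc h (τ α / α ^ g) = h (τ α * (α ^ g)⁻¹) := by rw [div_eq_mul_inv]
      _ ≤ h (τ α) + h ((α ^ g)⁻¹) := h_mul _ _
      _ = h α + g * h α := by rw [h_aut, h_inv, h_pow]
      _ = ((g : ℝ) + 1) * h α := by ring
end

section
/- Let 𝕃 be a field, τ an automorphism of 𝕃 with τ(ζ) = ζ^g for all p-power roots of unity ζ ∈ 𝕃, where g > 1 is an integer. Let α ∈ 𝕃^× be not a root of unity, β = τ(α)/α^g, and σ an automorphism of 𝕃 commuting with τ. If σ(β)/β is a p-power root of unity and σ(β) ≠ β, then a contradiction follows; i.e., for every automorphism σ of 𝕃 commuting with τ, if σ(β) ≠ β then σ(β)/β is not a p-power root of unity. (Key step: η = σ(α)/α satisfies g·h(η) = h(η), forcing η to be a root of unity; writing η = η₁η₂ with η₁ of p-power order and η₂ of order prime to p, one gets τ(η₁)/η₁^g = 1 and σ(β)/β = τ(η₂)/η₂^g has order prime to p.) -/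
/-- With `β = τ(α)/α^g` as in the central-element argument: for every automorphism `σ`
commuting with `τ`, if `σ(β) ≠ β` then `σ(β)/β` is not a `p`-power root of unity. -/
theorem sigma_beta_ratio_not_p_power_root (p : ℕ) [Fact p.Prime]
    (L : Type*) [Field L] (h : L → ℝ)
    (h_mul : ∀ x y : L, h (x * y) ≤ h x + h y)
    (h_inv : ∀ x : L, h x⁻¹ = h x)
    (h_pow : ∀ (x : L) (n : ℕ), h (x ^ n) = n * h x)
    (h_aut : ∀ (σ : L ≃+* L) (x : L), h (σ x) = h x)
    (h_kron : ∀ x : L, h x = 0 ↔ x = 0 ∨ ∃ n : ℕ, 0 < n ∧ x ^ n = 1)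
    (τ : L ≃+* L) (g : ℕ) (hg : 1 < g)
    (hτ : ∀ ζ : L, (∃ k : ℕ, ζ ^ p ^ k = 1) → τ ζ = ζ ^ g)
    (α : L) (hα0 : α ≠ 0) (hαtors : ¬ ∃ n : ℕ, 0 < n ∧ α ^ n = 1)
    (σ : L ≃+* L) (hcomm : ∀ x : L, σ (τ x) = τ (σ x))
    (hne : σ (τ α / α ^ g) ≠ τ α / α ^ g) :
    ¬ ∃ k : ℕ, (σ (τ α / α ^ g) / (τ α / α ^ g)) ^ p ^ k = 1 := by
  rintro ⟨k, hk⟩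
  have hσα : σ α ≠ 0 := by simpa using hα0
  have hτα : τ α ≠ 0 := by simpa using hα0
  have hτσα : τ (σ α) ≠ 0 := by simpa using hσα
  set η : L := σ α / α with hη
  have hη0 : η ≠ 0 := div_ne_zero hσα hα0
  have hβ0 : (τ α / α ^ g) ≠ 0 := div_ne_zero hτα (pow_ne_zero _ hα0)
  set w : L := σ (τ α / α ^ g) / (τ α / α ^ g) with hw
  have hw_eq : w = τ η / η ^ g := by
    have h1 : σ (τ α / α ^ g) = τ (σ α) / (σ α) ^ g := by
      rw [map_div₀, map_pow, hcomm]
    rw [hw, h1, hη, map_div₀]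
    field_simp
    ring_nf
    rw [inv_pow, mul_right_comm, mul_inv_cancel₀ (pow_ne_zero _ hα0), one_mul]
  -- From hk : w ^ p^k = 1, deduce τ (η^{p^k}) = (η^{p^k})^g
  have hk' : (τ η / η ^ g) ^ p ^ k = 1 := by rw [← hw_eq]; exact hk
  have hζτ : τ (η ^ p ^ k) = (η ^ p ^ k) ^ g := by
    rw [div_pow, div_eq_one_iff_eq (pow_ne_zero _ (pow_ne_zero _ hη0))] at hk'
    rw [map_pow, hk']
    rw [← pow_mul, ← pow_mul, mul_comm]
  -- Height argument: h(η^{p^k}) = 0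
  have hζ0 : h (η ^ p ^ k) = 0 := by
    have h1 : h (η ^ p ^ k) = g * h (η ^ p ^ k) := by
      calc h (η ^ p ^ k) = h (τ (η ^ p ^ k)) := (h_aut τ _).symm
        _ = h ((η ^ p ^ k) ^ g) := by rw [hζτ]
        _ = g * h (η ^ p ^ k) := h_pow _ _
    have hg' : (1 : ℝ) < g := by exact_mod_cast hg
    have h2 : ((g : ℝ) - 1) * h (η ^ p ^ k) = 0 := by linear_combination -h1
    rcases mul_eq_zero.mp h2 with h3 | h3
    · linarith
    · exact h3
  -- So η is a root of unity
  have hζne : η ^ p ^ k ≠ 0 := pow_ne_zero _ hη0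
  obtain ⟨n, hn, hηn⟩ : ∃ n : ℕ, 0 < n ∧ (η ^ p ^ k) ^ n = 1 := by
    rcases (h_kron _).mp hζ0 with h0 | h0
    · exact absurd h0 hζne
    · exact h0
  set m := p ^ k * n with hm
  have hm0 : m ≠ 0 :=
    Nat.mul_ne_zero (pow_ne_zero _ (Fact.out : p.Prime).pos.ne') hn.ne'
  have hηm : η ^ m = 1 := by rw [hm, pow_mul]; exact hηn
  -- split off the prime-to-p part m'
  set a := m.factorization p with ha
  set m' := m / p ^ a with hm'
  have hsplit : p ^ a * m' = m := Nat.ordProj_mul_ordCompl_eq_self m p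
  have hcop : Nat.Coprime p m' := Nat.coprime_ordCompl (Fact.out) hm0
  have hppow : τ (η ^ m') = (η ^ m') ^ g := by
    refine hτ _ ⟨a, ?_⟩
    rw [← pow_mul, mul_comm m' (p ^ a), hsplit, hηm]
  have hwm' : w ^ m' = 1 := by
    rw [hw_eq, div_pow, ← map_pow, hppow,
      div_eq_one_iff_eq (pow_ne_zero _ (pow_ne_zero _ hη0))]
    rw [← pow_mul, ← pow_mul, mul_comm]
  -- order of w divides coprime numbers p^k and m', hence w = 1
  have hd1 : orderOf w ∣ p ^ k := orderOf_dvd_of_pow_eq_one hk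
  have hd2 : orderOf w ∣ m' := orderOf_dvd_of_pow_eq_one hwm'
  have hcopk : Nat.Coprime (p ^ k) m' := hcop.pow_left k
  have hw1 : w = 1 := by
    have : orderOf w = 1 := (Nat.Coprime.coprime_dvd_left hd1 hcopk).eq_one_of_dvd hd2
    exact orderOf_eq_one_iff.mp this
  exact hne ((div_eq_one_iff_eq hβ0).mp hw1)
end
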